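/- For each transcript π = (m_mer, π_A, π_B) of a deterministic valid 4ANC protocol and each y ∈ Y_π, the correct Megan message M_meg(x, y, m_mer) is the same for all x ∈ X_π. (Otherwise, for x₁, x₂ ∈ X_π with M_meg(x₁,y,m_mer) ≠ M_meg(x₂,y,m_mer), Bob's proceed/reject decision, depending only on (y, π, m_meg), would cause him to proceed on some incorrect Megan message, contradicting validity.) -/
import Mathlib


/-- In a deterministic valid `4ANC` protocol, for each transcript
`π = (m_mer, π_A, π_B)` (here `t`), and each `y` in the column side `Y_π` of the
rectangle `R_π`, the correct Megan message `M_meg(x, y, m_mer)` is the same for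
all `x` in the row side `X_π`. -/
theorem stmt15 {X Y : Type}
    (Mmeg : X → Y → List Bool → List Bool)
    (run : X → Y → List Bool → List Bool → List Bool × List Bool)
    (proceed : Y → List Bool → List Bool → List Bool × List Bool → Bool)
    -- rectangle property of the deterministic Alice–Bob interaction
    (Hrect : ∀ x x' y y' m m' g g',
      run x y m g = run x' y' m' g' → run x y' m' g' = run x y m g)
    -- validity: Bob proceeds if and only if Megan's message is the correct one
    (Hvalid : ∀ x y m g, proceed y m g (run x y m g) = true ↔ g = Mmeg x y m)
    (mmer : List Bool) (t : List Bool × List Bool)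
    (x₁ x₂ : X) (y : Y)
    (hx₁ : ∃ y' g, run x₁ y' mmer g = t ∧ proceed y' mmer g t = true)
    (hx₂ : ∃ y' g, run x₂ y' mmer g = t ∧ proceed y' mmer g t = true)
    (hy : ∃ x' g, run x' y mmer g = t ∧ proceed y mmer g t = true) :
    Mmeg x₁ y mmer = Mmeg x₂ y mmer := by
  obtain ⟨y₁, g₁, h1, p1⟩ := hx₁
  obtain ⟨y₂, g₂, h2, p2⟩ := hx₂
  obtain ⟨x', g, h3, p3⟩ := hy
  have e1 : run x₁ y mmer g = t := by
    rw [Hrect x₁ x' y₁ y mmer mmer g₁ g (h1.trans h3.symm), h1]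
  have e2 : run x₂ y mmer g = t := by
    rw [Hrect x₂ x' y₂ y mmer mmer g₂ g (h2.trans h3.symm), h2]
  have q1 : g = Mmeg x₁ y mmer := (Hvalid x₁ y mmer g).mp (by rw [e1]; exact p3)
  have q2 : g = Mmeg x₂ y mmer := (Hvalid x₂ y mmer g).mp (by rw [e2]; exact p3)
  rw [← q1, ← q2]
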